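/- For every x ∈ (0, 1/2], one has x(1−x) > (π − R(x)·sin(πx)) / (R(x)·sin(πx)). -/

import Mathlib

open Real Set Filter Topology

/-- The digamma function `ψ(x) = Γ'(x)/Γ(x)`. -/
noncomputable def digamma (x : ℝ) : ℝ := deriv Real.Gamma x / Real.Gamma x

/-- The Ramanujan constant function `R(x) = -2γ - ψ(x) - ψ(1-x)`. -/
noncomputable def ramanujanR (x : ℝ) : ℝ :=
  -2 * Real.eulerMascheroniConstant - digamma x - digamma (1 - x)

/-- The Riemann zeta function as a real series `ζ(s) = Σ_{n=1}^∞ n^{-s}`. -/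
noncomputable def zetaR (s : ℝ) : ℝ := ∑' n : ℕ, 1 / ((n : ℝ) + 1) ^ s

/-- The generalized elliptic integral of the first kind
`K_a(r) = (π/2) Σ_{n=0}^∞ ((a)_n (1-a)_n / (n!)^2) r^(2n)`. -/
noncomputable def Ka (a r : ℝ) : ℝ :=
  Real.pi / 2 * ∑' n : ℕ,
    (Polynomial.eval a (ascPochhammer ℝ n) * Polynomial.eval (1 - a) (ascPochhammer ℝ n)
      / (Nat.factorial n : ℝ) ^ 2) * r ^ (2 * n)

/-- The generalized elliptic integral of the second kind
`E_a(r) = (π/2) Σ_{n=0}^∞ ((a-1)_n (1-a)_n / (n!)^2) r^(2n)`. -/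
noncomputable def Ea (a r : ℝ) : ℝ :=
  Real.pi / 2 * ∑' n : ℕ,
    (Polynomial.eval (a - 1) (ascPochhammer ℝ n) * Polynomial.eval (1 - a) (ascPochhammer ℝ n)
      / (Nat.factorial n : ℝ) ^ 2) * r ^ (2 * n)


lemma hasDerivAt_logGamma {y : ℝ} (hy : 0 < y) :
    HasDerivAt (fun z => Real.log (Real.Gamma z)) (digamma y) y := by
  have hd : DifferentiableAt ℝ Real.Gamma y :=
    Real.differentiableAt_Gamma (fun m => ne_of_gt (by have := Nat.cast_nonneg (α:=ℝ) m; linarith))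
  exact hd.hasDerivAt.log (Real.Gamma_pos_of_pos hy).ne'

lemma digamma_succ {y : ℝ} (hy : 0 < y) : digamma (y + 1) = digamma y + 1 / y := by
  have h1 : HasDerivAt (fun z => Real.log (Real.Gamma (z + 1))) (digamma (y + 1)) y := by
    simpa using (hasDerivAt_logGamma (by linarith : (0:ℝ) < y + 1)).comp_add_const y 1
  have h2 : HasDerivAt (fun z => Real.log (Real.Gamma z) + Real.log z)
      (digamma y + 1 / y) y := by
    rw [one_div]; exact (hasDerivAt_logGamma hy).add (Real.hasDerivAt_log hy.ne')
  have heq : (fun z => Real.log (Real.Gamma (z + 1))) =ᶠ[nhds y]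
      (fun z => Real.log (Real.Gamma z) + Real.log z) := by
    filter_upwards [eventually_gt_nhds hy] with z hz
    rw [Real.Gamma_add_one hz.ne', Real.log_mul hz.ne' (Real.Gamma_pos_of_pos hz).ne', add_comm]
  exact (h1.congr_of_eventuallyEq heq.symm).unique h2

lemma digamma_le_log {y : ℝ} (hy : 0 < y) : digamma y ≤ Real.log y := by
  have hc := Real.convexOn_log_Gamma
  have hder : DifferentiableAt ℝ (Real.log ∘ Real.Gamma) y := by
    exact ((Real.differentiableAt_Gamma
        (fun m => ne_of_gt (by have := Nat.cast_nonneg (α:=ℝ) m; linarith))).log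
      (Real.Gamma_pos_of_pos hy).ne')
  have h := hc.deriv_le_slope (Set.mem_Ioi.mpr hy)
    (Set.mem_Ioi.mpr (by linarith : (0:ℝ) < y + 1)) (by linarith) hder
  rw [slope_def_field] at h
  have hd : deriv (Real.log ∘ Real.Gamma) y = digamma y :=
    (hasDerivAt_logGamma hy).deriv
  rw [hd] at h
  calc digamma y ≤ (Real.log (Real.Gamma (y+1)) - Real.log (Real.Gamma y)) / (y + 1 - y) := h
    _ = Real.log y := by
        rw [Real.Gamma_add_one hy.ne', Real.log_mul hy.ne' (Real.Gamma_pos_of_pos hy).ne']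
        ring

lemma digamma_add_nat {y : ℝ} (hy : 0 < y) (n : ℕ) :
    digamma (y + n) = digamma y + ∑ k ∈ Finset.range n, 1 / (y + k) := by
  induction n with
  | zero => simp
  | succ n ih =>
      have h : y + (n + 1 : ℕ) = (y + n) + 1 := by push_cast; ring
      rw [h, digamma_succ (by positivity), ih, Finset.sum_range_succ, add_assoc]

lemma digamma_le {y : ℝ} (hy : 0 < y) :
    digamma y ≤ Real.log (y + 8) - ∑ k ∈ Finset.range 8, 1 / (y + k) := by
  have h := digamma_add_nat hy 8
  have h2 := digamma_le_log (by positivity : (0:ℝ) < y + (8:ℕ))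
  push_cast at h h2 ⊢
  linarith

noncomputable def qseq (t : ℝ) (n : ℕ) : ℝ :=
  n * (Nat.factorial n : ℝ)^2 / ∏ j ∈ Finset.range (n+1), ((j:ℝ)^2 + j + t)

lemma qprod_pos {t : ℝ} (ht : 0 < t) (n : ℕ) :
    0 < ∏ j ∈ Finset.range (n+1), ((j:ℝ)^2 + j + t) :=
  Finset.prod_pos (fun j _ => by positivity)

lemma qseq_pos {t : ℝ} (ht : 0 < t) {n : ℕ} (hn : 1 ≤ n) : 0 < qseq t n := by
  have := qprod_pos ht n
  have hn0 : (0:ℝ) < n := by exact_mod_cast hn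
  have : (0:ℝ) < (Nat.factorial n : ℝ) := by exact_mod_cast Nat.factorial_pos n
  unfold qseq; positivity

lemma gammaSeq_mul {x : ℝ} (hx : 0 < x) (hx1 : x < 1) {n : ℕ} (hn : 1 ≤ n) :
    Real.GammaSeq x n * Real.GammaSeq (1-x) n = qseq (x*(1-x)) n := by
  have hn0 : (0:ℝ) < n := by exact_mod_cast hn
  have h1 : (n:ℝ) ^ x * (n:ℝ) ^ (1-x) = n := by
    rw [← Real.rpow_add hn0]; simp
  have h2 : (∏ j ∈ Finset.range (n+1), (x + j)) * ∏ j ∈ Finset.range (n+1), (1 - x + j)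
      = ∏ j ∈ Finset.range (n+1), ((j:ℝ)^2 + j + x*(1-x)) := by
    rw [← Finset.prod_mul_distrib]
    exact Finset.prod_congr rfl (fun j _ => by ring)
  rw [Real.GammaSeq, Real.GammaSeq, qseq, div_mul_div_comm, h2]
  rw [show (n:ℝ) ^ x * (Nat.factorial n : ℝ) * ((n:ℝ) ^ (1-x) * (Nat.factorial n : ℝ))
      = ((n:ℝ)^x * (n:ℝ)^(1-x)) * ((Nat.factorial n : ℝ) * (Nat.factorial n : ℝ)) by ring, h1]
  ring

lemma qseq_le {t : ℝ} (ht : 0 < t) : ∀ M : ℕ, 8 ≤ M →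
    qseq t M ≤ qseq t 8 * (9*(M:ℝ)/(8*(M+1))) := by
  intro M hM
  induction M, hM using Nat.le_induction with
  | base => norm_num
  | succ M hM ih =>
      have hMn : (0:ℝ) < (M:ℝ) := by exact_mod_cast lt_of_lt_of_le (by norm_num) hM
      have hPM := qprod_pos ht M
      have hK : (0:ℝ) < ((M:ℝ)+1)^2 + ((M:ℝ)+1) + t := by positivity
      have hq8 : 0 < qseq t 8 := qseq_pos ht (by norm_num)
      have hstep : qseq t (M+1)
          = qseq t M * (((M:ℝ)+1)^3 / ((M:ℝ) * (((M:ℝ)+1)^2 + ((M:ℝ)+1) + t))) := by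
        rw [qseq, qseq, Finset.prod_range_succ]
        have hfac : (Nat.factorial (M+1) : ℝ) = ((M:ℝ)+1) * (Nat.factorial M : ℝ) := by
          push_cast [Nat.factorial_succ]; ring
        push_cast [hfac]
        field_simp
      rw [hstep]
      push_cast
      have hr : 0 ≤ ((M:ℝ)+1)^3 / ((M:ℝ) * (((M:ℝ)+1)^2 + ((M:ℝ)+1) + t)) := by positivity
      calc qseq t M * (((M:ℝ)+1)^3 / ((M:ℝ) * (((M:ℝ)+1)^2 + ((M:ℝ)+1) + t)))
          ≤ qseq t 8 * (9*(M:ℝ)/(8*(M+1)))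
            * (((M:ℝ)+1)^3 / ((M:ℝ) * (((M:ℝ)+1)^2 + ((M:ℝ)+1) + t))) :=
            mul_le_mul_of_nonneg_right ih hr
        _ ≤ qseq t 8 * (9*((M:ℝ)+1)/(8*((M:ℝ)+1+1))) := by
            rw [mul_assoc]
            apply mul_le_mul_of_nonneg_left _ hq8.le
            rw [div_mul_div_comm, div_le_div_iff₀ (by positivity) (by positivity)]
            nlinarith [mul_pos (mul_pos hMn (pow_pos (by positivity : (0:ℝ) < (M:ℝ)+1) 2)) ht]

lemma pi_div_sin_le {x : ℝ} (hx : 0 < x) (hx1 : x < 1) :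
    Real.pi / Real.sin (Real.pi * x) ≤ qseq (x*(1-x)) 8 * (9/8) := by
  have ht : 0 < x*(1-x) := by nlinarith
  have htend := (Real.GammaSeq_tendsto_Gamma x).mul (Real.GammaSeq_tendsto_Gamma (1-x))
  rw [Real.Gamma_mul_Gamma_one_sub] at htend
  apply le_of_tendsto htend
  filter_upwards [eventually_ge_atTop 8] with M hM
  rw [gammaSeq_mul hx hx1 (le_trans (by norm_num) hM)]
  calc qseq (x*(1-x)) M ≤ qseq (x*(1-x)) 8 * (9*(M:ℝ)/(8*(M+1))) := qseq_le ht M hM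
    _ ≤ qseq (x*(1-x)) 8 * (9/8) := by
        apply mul_le_mul_of_nonneg_left _ (qseq_pos ht (by norm_num)).le
        rw [div_le_div_iff₀ (by positivity) (by norm_num)]
        push_cast; nlinarith [Nat.cast_nonneg (α := ℝ) M]

lemma gammaConst_bound : 2 * Real.eulerMascheroniConstant + 6 * Real.log 2 < 53289/10000 := by
  have h := Real.eulerMascheroniConstant_lt_eulerMascheroniSeq' 64
  rw [Real.eulerMascheroniSeq'] at h
  norm_num at h
  rw [show (64:ℝ) = 2^6 by norm_num, Real.log_pow] at h
  have hl2 := Real.log_two_gt_d9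
  push_cast at h
  linarith

lemma keypoly {t : ℝ} (h0 : 0 < t) (h4 : t ≤ 1/4) :
    (0:ℝ) < ((272765574144)/25) + ((-738920579328)/25)*t + ((-22907319436944)/625)*t^2 + ((-1566596476332)/125)*t^3 + ((-1156744254487)/625)*t^4 + ((-348025765637)/2500)*t^5 + ((-14336698659)/2500)*t^6 + ((-657672617)/5000)*t^7 + ((-16137649)/10000)*t^8 + ((-368781)/40000)*t^9 + ((-1)/64)*t^10 := by
  have ht0 : (0:ℝ) ≤ t := h0.le
  have hp2 : t^2 ≤ t*(1/4)^1 := by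
    calc t^2 = t * t^1 := by ring
    _ ≤ t*(1/4)^1 := by gcongr
  have hp3 : t^3 ≤ t*(1/4)^2 := by
    calc t^3 = t * t^2 := by ring
    _ ≤ t*(1/4)^2 := by gcongr
  have hp4 : t^4 ≤ t*(1/4)^3 := by
    calc t^4 = t * t^3 := by ring
    _ ≤ t*(1/4)^3 := by gcongr
  have hp5 : t^5 ≤ t*(1/4)^4 := by
    calc t^5 = t * t^4 := by ring
    _ ≤ t*(1/4)^4 := by gcongr
  have hp6 : t^6 ≤ t*(1/4)^5 := by
    calc t^6 = t * t^5 := by ring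
    _ ≤ t*(1/4)^5 := by gcongr
  have hp7 : t^7 ≤ t*(1/4)^6 := by
    calc t^7 = t * t^6 := by ring
    _ ≤ t*(1/4)^6 := by gcongr
  have hp8 : t^8 ≤ t*(1/4)^7 := by
    calc t^8 = t * t^7 := by ring
    _ ≤ t*(1/4)^7 := by gcongr
  have hp9 : t^9 ≤ t*(1/4)^8 := by
    calc t^9 = t * t^8 := by ring
    _ ≤ t*(1/4)^8 := by gcongr
  have hp10 : t^10 ≤ t*(1/4)^9 := by
    calc t^10 = t * t^9 := by ring
    _ ≤ t*(1/4)^9 := by gcongr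
  nlinarith [hp2, hp3, hp4, hp5, hp6, hp7, hp8, hp9, hp10]

lemma key {t : ℝ} (h0 : 0 < t) (h4 : t ≤ 1/4) :
    9 * 40320^2 / (t*(2+t)*(6+t)*(12+t)*(20+t)*(30+t)*(42+t)*(56+t)*(72+t))
    < (1+t) * (1/t + 3/(2+t) + 5/(6+t) + 7/(12+t) + 9/(20+t) + 11/(30+t) + 13/(42+t)
        + 15/(56+t) - 53289/10000 - (8+t)/64) := by
  have h2 : (0:ℝ) < 2+t := by linarith
  have h6 : (0:ℝ) < 6+t := by linarith
  have h12 : (0:ℝ) < 12+t := by linarith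
  have h20 : (0:ℝ) < 20+t := by linarith
  have h30 : (0:ℝ) < 30+t := by linarith
  have h42 : (0:ℝ) < 42+t := by linarith
  have h56 : (0:ℝ) < 56+t := by linarith
  have h72 : (0:ℝ) < 72+t := by linarith
  have hP : (0:ℝ) < t*(2+t)*(6+t)*(12+t)*(20+t)*(30+t)*(42+t)*(56+t)*(72+t) := by positivity
  have hq := keypoly h0 h4
  rw [div_lt_iff₀ hP]
  have hid : (1+t) * (1/t + 3/(2+t) + 5/(6+t) + 7/(12+t) + 9/(20+t) + 11/(30+t) + 13/(42+t)
        + 15/(56+t) - 53289/10000 - (8+t)/64)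
        * (t*(2+t)*(6+t)*(12+t)*(20+t)*(30+t)*(42+t)*(56+t)*(72+t))
      = 9 * 40320^2 + t * (((272765574144)/25) + ((-738920579328)/25)*t + ((-22907319436944)/625)*t^2 + ((-1566596476332)/125)*t^3 + ((-1156744254487)/625)*t^4 + ((-348025765637)/2500)*t^5 + ((-14336698659)/2500)*t^6 + ((-657672617)/5000)*t^7 + ((-16137649)/10000)*t^8 + ((-368781)/40000)*t^9 + ((-1)/64)*t^10) := by
    field_simp
    ring
  rw [hid]
  nlinarith [mul_pos h0 hq]

lemma sum_pair {x : ℝ} (hx0 : 0 < x) (hx1 : x < 1) :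
    (∑ k ∈ Finset.range 8, 1/(x+k)) + (∑ k ∈ Finset.range 8, 1/(1-x+k))
    = 1/(x*(1-x)) + 3/(2+x*(1-x)) + 5/(6+x*(1-x)) + 7/(12+x*(1-x)) + 9/(20+x*(1-x))
      + 11/(30+x*(1-x)) + 13/(42+x*(1-x)) + 15/(56+x*(1-x)) := by
  have h1x : 0 < 1 - x := by linarith
  have e : ∀ k : ℕ, 1/(x+k) + 1/(1-x+k)
      = (2*(k:ℝ)+1)/((k:ℝ)^2+k+x*(1-x)) := by
    intro k
    have hk0 : (0:ℝ) ≤ k := Nat.cast_nonneg k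
    have ha : 0 < x + k := by linarith
    have hb : 0 < 1 - x + k := by linarith
    have hc : (x+k)*(1-x+k) = (k:ℝ)^2+k+x*(1-x) := by ring
    rw [div_add_div _ _ (ne_of_gt ha) (ne_of_gt hb), hc]
    congr 1
    ring
  have e0 := e 0
  have e1 := e 1
  have e2 := e 2
  have e3 := e 3
  have e4 := e 4
  have e5 := e 5
  have e6 := e 6
  have e7 := e 7
  norm_num [Finset.sum_range_succ] at e0 e1 e2 e3 e4 e5 e6 e7 ⊢
  linarith


theorem stmt8 (x : ℝ) (hx : x ∈ Set.Ioc (0 : ℝ) (1/2)) :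
    (Real.pi - ramanujanR x * Real.sin (Real.pi * x)) /
        (ramanujanR x * Real.sin (Real.pi * x)) <
      x * (1 - x) := by
  obtain ⟨hx0, hx2⟩ := hx
  have hx1 : x < 1 := by linarith
  have h1x : 0 < 1 - x := by linarith
  have ht0 : 0 < x*(1-x) := mul_pos hx0 h1x
  have ht4 : x*(1-x) ≤ 1/4 := by nlinarith
  -- lower bound for ramanujanR
  have hψx := digamma_le hx0
  have hψy := digamma_le h1x
  have hlog : Real.log (x+8) + Real.log (1-x+8) ≤ 6*Real.log 2 + (8+x*(1-x))/64 := by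
    rw [← Real.log_mul (by positivity : (0:ℝ) < x+8).ne' (by linarith : (0:ℝ) < 1-x+8).ne']
    rw [show (x+8)*(1-x+8) = 72 + x*(1-x) by ring]
    have h72 : (0:ℝ) < 72 + x*(1-x) := by linarith
    have hd : Real.log (72+x*(1-x)) - Real.log 64 ≤ (8+x*(1-x))/64 := by
      rw [← Real.log_div h72.ne' (by norm_num : (64:ℝ) ≠ 0)]
      have := Real.log_le_sub_one_of_pos (show (0:ℝ) < (72+x*(1-x))/64 by positivity)
      linarith
    have h64 : Real.log 64 = 6*Real.log 2 := by
      rw [show (64:ℝ) = 2^6 by norm_num, Real.log_pow]; push_cast; ring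
    linarith
  have hsum := sum_pair hx0 hx1
  have hR : 1/(x*(1-x)) + 3/(2+x*(1-x)) + 5/(6+x*(1-x)) + 7/(12+x*(1-x)) + 9/(20+x*(1-x))
      + 11/(30+x*(1-x)) + 13/(42+x*(1-x)) + 15/(56+x*(1-x)) - 53289/10000 - (8+x*(1-x))/64
      ≤ ramanujanR x := by
    have hγ := gammaConst_bound
    unfold ramanujanR
    rw [← hsum]
    linarith
  -- upper bound for pi / sin
  have hq8 : qseq (x*(1-x)) 8 * (9/8)
      = 9 * 40320^2 / ((x*(1-x))*(2+x*(1-x))*(6+x*(1-x))*(12+x*(1-x))*(20+x*(1-x))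
          *(30+x*(1-x))*(42+x*(1-x))*(56+x*(1-x))*(72+x*(1-x))) := by
    rw [qseq]
    norm_num [Finset.prod_range_succ, Nat.factorial]
    ring
  have hkey := key ht0 ht4
  have hchain : Real.pi / Real.sin (Real.pi * x) < (1+x*(1-x)) * ramanujanR x := by
    calc Real.pi / Real.sin (Real.pi * x) ≤ qseq (x*(1-x)) 8 * (9/8) := pi_div_sin_le hx0 hx1
      _ = 9 * 40320^2 / ((x*(1-x))*(2+x*(1-x))*(6+x*(1-x))*(12+x*(1-x))*(20+x*(1-x))
          *(30+x*(1-x))*(42+x*(1-x))*(56+x*(1-x))*(72+x*(1-x))) := hq8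
      _ < (1+x*(1-x)) * (1/(x*(1-x)) + 3/(2+x*(1-x)) + 5/(6+x*(1-x)) + 7/(12+x*(1-x))
          + 9/(20+x*(1-x)) + 11/(30+x*(1-x)) + 13/(42+x*(1-x)) + 15/(56+x*(1-x))
          - 53289/10000 - (8+x*(1-x))/64) := hkey
      _ ≤ (1+x*(1-x)) * ramanujanR x := by
          apply mul_le_mul_of_nonneg_left hR (by linarith)
  have hsin : 0 < Real.sin (Real.pi * x) := by
    apply Real.sin_pos_of_pos_of_lt_pi (by positivity)
    nlinarith [Real.pi_pos]
  rw [div_lt_iff₀ hsin] at hchain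
  have hRs : 0 < ramanujanR x * Real.sin (Real.pi * x) := by
    nlinarith [Real.pi_pos]
  rw [div_lt_iff₀ hRs]
  nlinarith [hchain]
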